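/- Let A be a 2×2 positive semidefinite complex matrix and {ψ₀, ψ₁} an orthonormal basis of ℂ². For any indices i₁,…,i_m ∈ {0,1}, the product ⟨ψ_{i₁}|A|ψ_{i₂}⟩⟨ψ_{i₂}|A|ψ_{i₃}⟩⋯⟨ψ_{i_m}|A|ψ_{i₁}⟩ is a nonnegative real number. -/

import Mathlib

open Matrix ComplexOrder in
theorem cyclic_product_nonneg {m : ℕ} [NeZero m]
    (A : Matrix (Fin 2) (Fin 2) ℂ) (hA : A.PosSemidef)
    (ψ : Fin 2 → (Fin 2 → ℂ))
    (hψ : ∀ a b, star (ψ a) ⬝ᵥ ψ b = if a = b then (1 : ℂ) else 0)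
    (i : Fin m → Fin 2) :
    0 ≤ ∏ j : Fin m, (star (ψ (i j)) ⬝ᵥ A.mulVec (ψ (i (j + 1)))) := by
  set B : Fin 2 → Fin 2 → ℂ := fun a b => star (ψ a) ⬝ᵥ A.mulVec (ψ b) with hBdef
  show 0 ≤ ∏ j : Fin m, B (i j) (i (j + 1))
  have hherm : ∀ a b, B b a = star (B a b) := by
    intro a b
    symm
    simp only [hBdef]
    rw [star_dotProduct, star_star, star_mulVec, hA.1.eq, ← dotProduct_mulVec]
  have hdiag : ∀ a, 0 ≤ B a a := fun a => hA.dotProduct_mulVec_nonneg (ψ a)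
  set n : Fin 2 × Fin 2 → ℕ :=
    fun p => (Finset.univ.filter (fun j : Fin m => (i j, i (j + 1)) = p)).card with hndef
  have key : ∏ j : Fin m, B (i j) (i (j + 1)) = ∏ p : Fin 2 × Fin 2, B p.1 p.2 ^ n p := by
    rw [← Finset.prod_fiberwise Finset.univ (fun j => (i j, i (j + 1)))
      (fun j => B (i j) (i (j + 1)))]
    refine Finset.prod_congr rfl fun p _ => ?_
    rw [Finset.prod_congr rfl (g := fun _ => B p.1 p.2) (fun j hj => ?_), Finset.prod_const]
    rw [Finset.mem_filter] at hj
    rw [← hj.2]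
  have hone : ∀ x : Fin 2, x = 1 ↔ ¬ x = 0 := by decide
  have hshift : (Finset.univ.filter (fun j : Fin m => i (j + 1) = 0)).card
      = (Finset.univ.filter (fun j : Fin m => i j = 0)).card := by
    apply Finset.card_bij' (fun j _ => j + 1) (fun j _ => j - 1) <;>
      intros <;> simp_all
  have hsplit1 : n (0, 0) + n (0, 1)
      = (Finset.univ.filter (fun j : Fin m => i j = 0)).card := by
    simp only [hndef, Prod.mk.injEq, ← Finset.filter_filter, hone]
    exact Finset.card_filter_add_card_filter_not (fun j => i (j + 1) = 0)
  have hsplit2 : ∀ b : Fin 2, n (0, b) + n (1, b)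
      = (Finset.univ.filter (fun j : Fin m => i (j + 1) = b)).card := by
    intro b
    simp only [hndef, Prod.mk.injEq, and_comm, ← Finset.filter_filter, hone]
    exact Finset.card_filter_add_card_filter_not (fun j => i j = 0)
  have hsplit2' := hsplit2 0
  have hcount : n (1, 0) = n (0, 1) := by omega
  have h01 : 0 ≤ B 0 1 * B 1 0 := by
    rw [hherm 0 1]; exact mul_star_self_nonneg _
  rw [key, Fintype.prod_prod_type]
  simp only [Fin.prod_univ_two, hcount]
  rw [show B 0 0 ^ n (0,0) * B 0 1 ^ n (0,1) * (B 1 0 ^ n (0,1) * B 1 1 ^ n (1,1))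
      = B 0 0 ^ n (0,0) * (B 0 1 * B 1 0) ^ n (0,1) * B 1 1 ^ n (1,1) from by
    rw [mul_pow]; ring]
  exact mul_nonneg (mul_nonneg (pow_nonneg (hdiag 0) _) (pow_nonneg h01 _))
    (pow_nonneg (hdiag 1) _)
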